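/- Fix real numbers s, u with 0 ≤ s ≤ u ≤ 1. The function g(t) = t − (1/2)·log(e^{2t} + 2πe·(u − s)) − (1/2)·log(e^{2t} + 2πe·(1 − s)) is monotonically nondecreasing on the set {t : t ≤ (1/4)·log((2πe)²·(u − s)·(1 − s))}. -/

import Mathlib

theorem g_monotone_on_low_range
    (s u : ℝ) (hs : 0 ≤ s) (hsu : s ≤ u) (hu : u ≤ 1)
    (hus : 0 < u - s) (h1s : 0 < 1 - s) :
    MonotoneOn
      (fun t : ℝ => t -
        (1 / 2) * Real.log (Real.exp (2 * t) + 2 * Real.pi * Real.exp 1 * (u - s)) -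
        (1 / 2) * Real.log (Real.exp (2 * t) + 2 * Real.pi * Real.exp 1 * (1 - s)))
      {t : ℝ | t ≤ (1 / 4) * Real.log ((2 * Real.pi * Real.exp 1) ^ 2 * (u - s) * (1 - s))} := by
  have hπ := Real.pi_pos
  have he := Real.exp_pos 1
  set a := 2 * Real.pi * Real.exp 1 * (u - s) with ha
  set b := 2 * Real.pi * Real.exp 1 * (1 - s) with hb
  have hapos : 0 < a := by positivity
  have hbpos : 0 < b := by positivity
  have hab : (2 * Real.pi * Real.exp 1) ^ 2 * (u - s) * (1 - s) = a * b := by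
    rw [ha, hb]; ring
  rw [hab]
  have hset : {t : ℝ | t ≤ (1 / 4) * Real.log (a * b)}
      = Set.Iic ((1 / 4) * Real.log (a * b)) := rfl
  rw [hset]
  have hderiv : ∀ t : ℝ, HasDerivAt
      (fun t : ℝ => t - (1 / 2) * Real.log (Real.exp (2 * t) + a)
        - (1 / 2) * Real.log (Real.exp (2 * t) + b))
      (1 - Real.exp (2 * t) / (Real.exp (2 * t) + a)
        - Real.exp (2 * t) / (Real.exp (2 * t) + b)) t := by
    intro t
    have hx : (0:ℝ) < Real.exp (2 * t) := Real.exp_pos _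
    have he2 : HasDerivAt (fun t : ℝ => Real.exp (2 * t)) (2 * Real.exp (2 * t)) t := by
      have h := (Real.hasDerivAt_exp (2 * t)).comp t ((hasDerivAt_id t).const_mul 2)
      have : (Real.exp ∘ fun y : ℝ => 2 * y) = fun t : ℝ => Real.exp (2 * t) := rfl
      rw [this] at h
      simpa [mul_comm] using h
    have hla : HasDerivAt (fun t : ℝ => Real.log (Real.exp (2 * t) + a))
        (2 * Real.exp (2 * t) / (Real.exp (2 * t) + a)) t :=
      (he2.add_const a).log (by positivity)
    have hlb : HasDerivAt (fun t : ℝ => Real.log (Real.exp (2 * t) + b))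
        (2 * Real.exp (2 * t) / (Real.exp (2 * t) + b)) t :=
      (he2.add_const b).log (by positivity)
    have := ((hasDerivAt_id t).sub (hla.const_mul (1/2))).sub (hlb.const_mul (1/2))
    refine this.congr_deriv ?_
    have hxa : Real.exp (2*t) + a ≠ 0 := by positivity
    have hxb : Real.exp (2*t) + b ≠ 0 := by positivity
    ring
  have hdiff : Differentiable ℝ (fun t : ℝ => t - (1 / 2) * Real.log (Real.exp (2 * t) + a)
        - (1 / 2) * Real.log (Real.exp (2 * t) + b)) := fun t => (hderiv t).differentiableAt
  apply monotoneOn_of_deriv_nonneg (convex_Iic _) hdiff.continuous.continuousOn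
    (fun t _ => (hdiff t).differentiableWithinAt)
  intro t ht
  rw [(hderiv t).deriv]
  set x := Real.exp (2 * t) with hxdef
  have hx : 0 < x := Real.exp_pos _
  have hxa : 0 < x + a := by linarith
  have hxb : 0 < x + b := by linarith
  have key : x ^ 2 ≤ a * b := by
    rw [interior_Iic, Set.mem_Iio] at ht
    have h4t : 4 * t < Real.log (a * b) := by linarith
    have h5 := Real.exp_lt_exp.mpr h4t
    rw [Real.exp_log (by positivity)] at h5
    have hx2 : x ^ 2 = Real.exp (4 * t) := by
      rw [hxdef, sq, ← Real.exp_add]; ring_nf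
    linarith [hx2 ▸ h5]
  have heq : 1 - x / (x + a) - x / (x + b) = (a * b - x ^ 2) / ((x + a) * (x + b)) := by
    field_simp
    ring
  rw [heq]
  apply div_nonneg (by linarith) (by positivity)
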